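/- Let μ be a probability measure on ℝ, let G : ℝ → ℝ be convex and continuous and suppose there exist p, q, r ∈ ℝ with p > 0 such that p x² + q x + r ≤ G(x) for all x ∈ ℝ, and let α ∈ ℝ. Then the constraint set D_α := { g ∈ L²(μ) : ∫ G(g) dμ ≤ α } is norm-bounded in L²(μ) and weakly sequentially compact: every sequence (g_i) ⊆ D_α has a subsequence converging weakly in L²(μ) to some g ∈ D_α (in particular ∫ G(g) dμ ≤ α for the weak limit). -/

import Mathlib

open MeasureTheory Filter
open scoped Topology

noncomputable section

open scoped RealInnerProductSpace

section AuxHilbert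

variable {E : Type*} [NormedAddCommGroup E] [InnerProductSpace ℝ E] [CompleteSpace E]

private theorem aux_mem_of_weak_limit (S : Set E) (hconv : Convex ℝ S) (hcl : IsClosed S)
    (v : ℕ → E) (hv : ∀ k, v k ∈ S) (g : E)
    (hw : ∀ ψ : E, Tendsto (fun k => ⟪v k, ψ⟫) atTop (𝓝 ⟪g, ψ⟫)) : g ∈ S := by
  obtain ⟨w, hwS, hmin⟩ := exists_norm_eq_iInf_of_complete_convex ⟨v 0, hv 0⟩
    (hcl.isComplete) hconv g
  rw [norm_eq_iInf_iff_real_inner_le_zero hconv hwS] at hmin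
  have h1 : ∀ k, ⟪v k, g - w⟫ ≤ ⟪w, g - w⟫ := by
    intro k
    have := hmin (v k) (hv k)
    have h2 : ⟪g - w, v k - w⟫ = ⟪v k, g - w⟫ - ⟪w, g - w⟫ := by
      rw [inner_sub_right, real_inner_comm (g - w) (v k), real_inner_comm (g - w) w]
    linarith [h2 ▸ this]
  have h3 : ⟪g, g - w⟫ ≤ ⟪w, g - w⟫ := le_of_tendsto (hw (g - w)) (Eventually.of_forall h1)
  have h4 : ⟪g - w, g - w⟫ ≤ 0 := by
    rw [inner_sub_left]; linarith
  have h5 : g - w = 0 := by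
    have h6 := real_inner_self_nonneg (x := g - w)
    exact inner_self_eq_zero.mp (le_antisymm h4 h6)
  have h7 : g = w := by rwa [sub_eq_zero] at h5
  exact h7 ▸ hwS

private theorem aux_exists_weak_subseq (u : ℕ → E) (C : ℝ) (hC : ∀ i, ‖u i‖ ≤ C) :
    ∃ φ : ℕ → ℕ, StrictMono φ ∧ ∃ g : E, ∀ ψ : E,
      Tendsto (fun k => ⟪u (φ k), ψ⟫) atTop (𝓝 ⟪g, ψ⟫) := by
  have hC0 : 0 ≤ C := le_trans (norm_nonneg (u 0)) (hC 0)
  set S : Set (ℕ → ℝ) := Set.univ.pi fun _ => Set.Icc (-(C * C)) (C * C) with hS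
  have hScomp : IsCompact S := isCompact_univ_pi fun _ => isCompact_Icc
  have hmem : ∀ i, (fun j => ⟪u i, u j⟫) ∈ S := by
    intro i
    rw [Set.mem_univ_pi]
    intro j
    exact abs_le.mp ((abs_real_inner_le_norm (u i) (u j)).trans
      (mul_le_mul (hC i) (hC j) (norm_nonneg _) hC0))
  obtain ⟨a, -, φ, hφ, hconv⟩ := hScomp.tendsto_subseq hmem
  have hptwise : ∀ j, Tendsto (fun k => ⟪u (φ k), u j⟫) atTop (𝓝 (a j)) :=
    fun j => tendsto_pi_nhds.mp hconv j
  set D : Set E := {ψ : E | ∃ L : ℝ, Tendsto (fun k => ⟪u (φ k), ψ⟫) atTop (𝓝 L)} with hD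
  have hspan : ∀ ψ ∈ Submodule.span ℝ (Set.range u), ψ ∈ D := by
    intro ψ hψ
    induction hψ using Submodule.span_induction with
    | mem x hx => obtain ⟨j, rfl⟩ := hx; exact ⟨a j, hptwise j⟩
    | zero => exact ⟨0, by simpa using tendsto_const_nhds⟩
    | add x y _ _ hx hy =>
        obtain ⟨Lx, hLx⟩ := hx; obtain ⟨Ly, hLy⟩ := hy
        exact ⟨Lx + Ly, by simpa [inner_add_right] using hLx.add hLy⟩
    | smul c x _ hx =>
        obtain ⟨Lx, hLx⟩ := hx
        exact ⟨c * Lx, by simpa [inner_smul_right] using hLx.const_mul c⟩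
  have hcauchy : ∀ ψ : E, CauchySeq (fun k => ⟪u (φ k), ψ⟫) := by
    intro ψ
    set K : Submodule ℝ E := (Submodule.span ℝ (Set.range u)).topologicalClosure with hK
    haveI : CompleteSpace K :=
      ((Submodule.span ℝ (Set.range u)).isClosed_topologicalClosure).completeSpace_coe
    obtain ⟨y, hy, z, hz, hyz⟩ := K.exists_add_mem_mem_orthogonal ψ
    have hz0 : ∀ i, ⟪u i, z⟫ = 0 := by
      intro i
      have hui : u i ∈ K := Submodule.le_topologicalClosure _
        (Submodule.subset_span ⟨i, rfl⟩)
      exact (Submodule.mem_orthogonal K z).mp hz (u i) hui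
    have heq : ∀ k, ⟪u (φ k), ψ⟫ = ⟪u (φ k), y⟫ := by
      intro k; rw [hyz, inner_add_right, hz0, add_zero]
    rw [show (fun k => ⟪u (φ k), ψ⟫) = fun k => ⟪u (φ k), y⟫ from funext heq]
    rw [Metric.cauchySeq_iff]
    intro ε hε
    have hyc : (y : E) ∈ closure ((Submodule.span ℝ (Set.range u)) : Set E) := hy
    obtain ⟨w, hwmem, hwd⟩ := Metric.mem_closure_iff.mp hyc (ε / (3 * (C + 1)))
      (by positivity)
    obtain ⟨L, hL⟩ := hspan w hwmem
    have hcs : CauchySeq (fun k => ⟪u (φ k), w⟫) := hL.cauchySeq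
    rw [Metric.cauchySeq_iff] at hcs
    obtain ⟨N, hN⟩ := hcs (ε / 3) (by positivity)
    refine ⟨N, fun m hm n hn => ?_⟩
    have key : ∀ k, |⟪u (φ k), y⟫ - ⟪u (φ k), w⟫| ≤ ε / 3 := by
      intro k
      rw [← inner_sub_right]
      refine (abs_real_inner_le_norm _ _).trans ?_
      have hyw : ‖(y : E) - w‖ ≤ ε / (3 * (C + 1)) := by
        rw [dist_eq_norm] at hwd; exact le_of_lt hwd
      have h1 : ‖u (φ k)‖ * ‖(y : E) - w‖ ≤ C * (ε / (3 * (C + 1))) :=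
        mul_le_mul (hC _) hyw (norm_nonneg _) hC0
      refine h1.trans ?_
      rw [← mul_div_assoc, div_le_div_iff₀ (by positivity) (by norm_num : (0:ℝ) < 3)]
      nlinarith
    have t3 := hN m hm n hn
    rw [Real.dist_eq] at t3 ⊢
    have tri : |⟪u (φ m), y⟫ - ⟪u (φ n), y⟫| ≤
        |⟪u (φ m), y⟫ - ⟪u (φ m), w⟫| + (|⟪u (φ m), w⟫ - ⟪u (φ n), w⟫|
          + |⟪u (φ n), w⟫ - ⟪u (φ n), y⟫|) :=
      (abs_sub_le _ _ _).trans (by gcongr; exact abs_sub_le _ _ _)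
    have t2 : |⟪u (φ n), w⟫ - ⟪u (φ n), y⟫| ≤ ε / 3 := by
      rw [abs_sub_comm]; exact key n
    linarith [key m]
  have hlim : ∀ ψ : E, ∃ L : ℝ, Tendsto (fun k => ⟪u (φ k), ψ⟫) atTop (𝓝 L) :=
    fun ψ => cauchySeq_tendsto_of_complete (hcauchy ψ)
  choose f hf using hlim
  have hadd : ∀ x y : E, f (x + y) = f x + f y := by
    intro x y
    refine tendsto_nhds_unique (hf (x + y)) ?_
    simpa [inner_add_right] using (hf x).add (hf y)
  have hsmul : ∀ (c : ℝ) (x : E), f (c • x) = c * f x := by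
    intro c x
    refine tendsto_nhds_unique (hf (c • x)) ?_
    simpa [inner_smul_right] using (hf x).const_mul c
  have hbound : ∀ x : E, ‖f x‖ ≤ C * ‖x‖ := by
    intro x
    have hb : ∀ k, ‖⟪u (φ k), x⟫‖ ≤ C * ‖x‖ := fun k =>
      (abs_real_inner_le_norm _ _).trans
        (mul_le_mul_of_nonneg_right (hC _) (norm_nonneg _))
    exact le_of_tendsto (hf x).norm (Eventually.of_forall hb)
  let F : E →L[ℝ] ℝ := LinearMap.mkContinuous
    { toFun := f, map_add' := hadd, map_smul' := hsmul } C hbound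
  refine ⟨φ, hφ, (InnerProductSpace.toDual ℝ E).symm F, fun ψ => ?_⟩
  rw [InnerProductSpace.toDual_symm_apply]
  exact hf ψ

end AuxHilbert

section AuxL2

variable {X : Type*} [MeasurableSpace X]

private theorem aux_coeFn_sum (μ : Measure X)
    {ι : Type*} (t : Finset ι) (f : ι → Lp ℝ 2 μ) :
    ⇑(∑ i ∈ t, f i) =ᵐ[μ] fun x => ∑ i ∈ t, f i x := by
  classical
  induction t using Finset.cons_induction with
  | empty => simp only [Finset.sum_empty]; exact Lp.coeFn_zero ℝ 2 μ
  | cons a s ha ih =>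
      rw [Finset.sum_cons]
      filter_upwards [Lp.coeFn_add (f a) (∑ i ∈ s, f i), ih] with x h1 h2
      simp only [Finset.sum_cons, h1, Pi.add_apply, h2]

private theorem aux_norm_bound (μ : Measure X) [IsProbabilityMeasure μ]
    (G : ℝ → ℝ) (p q r : ℝ) (hp : 0 < p) (hquad : ∀ x, p * x ^ 2 + q * x + r ≤ G x)
    (α : ℝ) (g : Lp ℝ 2 μ) (hint : Integrable (fun x => G (g x)) μ)
    (hle : (∫ x, G (g x) ∂μ) ≤ α) :
    ‖g‖ ≤ Real.sqrt (max 0 ((α - (r - q ^ 2 / (2 * p))) * (2 / p))) := by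
  set c' : ℝ := r - q ^ 2 / (2 * p) with hc'
  have hg2 : Integrable (fun x => (g x) ^ 2) μ := (Lp.memLp g).integrable_sq
  have hptw : ∀ x : X, p / 2 * (g x) ^ 2 + c' ≤ G (g x) := by
    intro x
    have h := hquad (g x)
    have hd : q ^ 2 / (2 * p) * (2 * p) = q ^ 2 := div_mul_cancel₀ _ (by positivity)
    nlinarith [sq_nonneg (p * g x + q), hp, hd]
  have hlhs : Integrable (fun x => p / 2 * (g x) ^ 2 + c') μ :=
    (hg2.const_mul _).add (integrable_const _)
  have hmono : (∫ x, (p / 2 * (g x) ^ 2 + c') ∂μ) ≤ ∫ x, G (g x) ∂μ :=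
    integral_mono hlhs hint hptw
  have hsplit : (∫ x, (p / 2 * (g x) ^ 2 + c') ∂μ)
      = p / 2 * (∫ x, (g x) ^ 2 ∂μ) + c' := by
    rw [integral_add (hg2.const_mul _) (integrable_const _), integral_const_mul,
      integral_const]
    simp
  have hnormsq : (∫ x, (g x) ^ 2 ∂μ) = ‖g‖ ^ 2 := by
    rw [← real_inner_self_eq_norm_sq, L2.inner_def]
    congr 1
    ext x
    simp [RCLike.inner_apply, sq]
  have hB : ‖g‖ ^ 2 ≤ (α - c') * (2 / p) := by
    rw [hsplit, hnormsq] at hmono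
    have h9 : p / 2 * ‖g‖ ^ 2 ≤ α - c' := by linarith
    calc ‖g‖ ^ 2 = (p / 2 * ‖g‖ ^ 2) * (2 / p) := by field_simp
      _ ≤ (α - c') * (2 / p) := by
          apply mul_le_mul_of_nonneg_right h9 (by positivity)
  calc ‖g‖ = Real.sqrt (‖g‖ ^ 2) := (Real.sqrt_sq (norm_nonneg g)).symm
    _ ≤ Real.sqrt (max 0 ((α - c') * (2 / p))) :=
        Real.sqrt_le_sqrt (hB.trans (le_max_right _ _))

private theorem aux_comb (μ : Measure X) [IsProbabilityMeasure μ]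
    (G : ℝ → ℝ) (hGconv : ConvexOn ℝ Set.univ G) (hGcont : Continuous G)
    (c α : ℝ) (hGc : ∀ x, c ≤ G x)
    (v : ℕ → Lp ℝ 2 μ)
    (hv : ∀ k, Integrable (fun x => G (v k x)) μ ∧ (∫ x, G (v k x) ∂μ) ≤ α)
    (h : Lp ℝ 2 μ) (hh : h ∈ convexHull ℝ (Set.range v)) :
    Integrable (fun x => G (h x)) μ ∧ (∫ x, G (h x) ∂μ) ≤ α := by
  classical
  rw [convexHull_eq] at hh
  obtain ⟨ι, t, w, z, hw0, hw1, hz, hcm⟩ := hh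
  have hz' : ∀ i ∈ t, ∃ j, v j = z i := fun i hi => hz i hi
  choose! k hk using hz'
  have hsum : h = ∑ i ∈ t, w i • z i := by
    rw [← hcm, Finset.centerMass_eq_of_sum_1 _ _ hw1]
  have hcoe : ⇑h =ᵐ[μ] fun x => ∑ i ∈ t, w i * (z i : X → ℝ) x := by
    rw [hsum]
    refine (aux_coeFn_sum μ t _).trans ?_
    have hsm : ∀ i ∈ t, ⇑(w i • z i) =ᵐ[μ] fun x => w i * (z i : X → ℝ) x := by
      intro i _
      filter_upwards [Lp.coeFn_smul (w i) (z i)] with x hx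
      simpa [smul_eq_mul] using hx
    have hall : ∀ᵐ x ∂μ, ∀ i ∈ t, (w i • z i : Lp ℝ 2 μ) x = w i * (z i : X → ℝ) x :=
      (eventually_all_finset t).mpr hsm
    filter_upwards [hall] with x hx
    exact Finset.sum_congr rfl hx
  set B : X → ℝ := fun x => ∑ i ∈ t, w i * G ((z i : X → ℝ) x) with hB
  have hGB : ∀ᵐ x ∂μ, G (h x) ≤ B x := by
    filter_upwards [hcoe] with x hx
    rw [hx]
    have := hGconv.map_sum_le hw0 hw1 (fun i _ => Set.mem_univ ((z i : X → ℝ) x))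
    simpa [smul_eq_mul] using this
  have hintz : ∀ i ∈ t, Integrable (fun x => G ((z i : X → ℝ) x)) μ := by
    intro i hi; rw [← hk i hi]; exact (hv (k i)).1
  have hintB : Integrable B μ :=
    integrable_finset_sum t fun i hi => ((hintz i hi).const_mul (w i))
  have hmeas : AEStronglyMeasurable (fun x => G (h x)) μ :=
    hGcont.comp_aestronglyMeasurable (Lp.aestronglyMeasurable h)
  have hint : Integrable (fun x => G (h x)) μ := by
    refine Integrable.mono' (hintB.abs.add (integrable_const |c|)) hmeas ?_
    filter_upwards [hGB] with x hx
    rw [Real.norm_eq_abs, abs_le]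
    constructor
    · have h0 := hGc (h x)
      have h1 : -|c| ≤ c := neg_abs_le c
      have h2 : (0:ℝ) ≤ |B x| := abs_nonneg _
      simp only [Pi.add_apply]
      linarith
    · have h3 : B x ≤ |B x| := le_abs_self _
      have h2 : (0:ℝ) ≤ |c| := abs_nonneg _
      simp only [Pi.add_apply]
      linarith
  refine ⟨hint, ?_⟩
  have hIB : (∫ x, B x ∂μ) ≤ α := by
    rw [hB]
    rw [integral_finset_sum t fun i hi => ((hintz i hi).const_mul (w i))]
    have hterm : ∀ i ∈ t, (∫ x, w i * G ((z i : X → ℝ) x) ∂μ) ≤ w i * α := by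
      intro i hi
      rw [integral_const_mul]
      have hle : (∫ x, G ((z i : X → ℝ) x) ∂μ) ≤ α := by
        rw [← hk i hi]; exact (hv (k i)).2
      exact mul_le_mul_of_nonneg_left hle (hw0 i hi)
    calc (∑ i ∈ t, ∫ x, w i * G ((z i : X → ℝ) x) ∂μ) ≤ ∑ i ∈ t, w i * α :=
          Finset.sum_le_sum hterm
      _ = (∑ i ∈ t, w i) * α := by rw [Finset.sum_mul]
      _ = α := by rw [hw1, one_mul]
  exact (integral_mono_ae hint hintB hGB).trans hIB

end AuxL2

/-- for a probability measure `μ`, a continuous convex cost `G`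
dominating a quadratic with positive leading coefficient, and any level `α`, the
constraint set `D_α = {g ∈ L²(μ) : ∫ G(g) dμ ≤ α}` is norm-bounded and weakly
sequentially compact in `L²(μ)`: every sequence in `D_α` has a subsequence converging
weakly in `L²(μ)` to an element of `D_α`. -/
theorem constraint_set_weakly_compact
    {X : Type*} [MeasurableSpace X] (μ : Measure X) [IsProbabilityMeasure μ]
    (G : ℝ → ℝ) (hGconv : ConvexOn ℝ Set.univ G) (hGcont : Continuous G)
    (p q r : ℝ) (hp : 0 < p) (hquad : ∀ x, p * x ^ 2 + q * x + r ≤ G x)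
    (α : ℝ) :
    (∃ M : ℝ, ∀ g : Lp ℝ 2 μ,
      (Integrable (fun x => G (g x)) μ ∧ (∫ x, G (g x) ∂μ) ≤ α) → ‖g‖ ≤ M) ∧
    (∀ gs : ℕ → Lp ℝ 2 μ,
      (∀ i, Integrable (fun x => G (gs i x)) μ ∧ (∫ x, G (gs i x) ∂μ) ≤ α) →
      ∃ (φ : ℕ → ℕ) (g : Lp ℝ 2 μ), StrictMono φ ∧
        (Integrable (fun x => G (g x)) μ ∧ (∫ x, G (g x) ∂μ) ≤ α) ∧
        ∀ ψ : Lp ℝ 2 μ,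
          Tendsto (fun k => ∫ x, gs (φ k) x * ψ x ∂μ) atTop
            (𝓝 (∫ x, g x * ψ x ∂μ))) := by
  set M : ℝ := Real.sqrt (max 0 ((α - (r - q ^ 2 / (2 * p))) * (2 / p))) with hM
  have hMbound : ∀ g : Lp ℝ 2 μ,
      (Integrable (fun x => G (g x)) μ ∧ (∫ x, G (g x) ∂μ) ≤ α) → ‖g‖ ≤ M :=
    fun g hg => aux_norm_bound μ G p q r hp hquad α g hg.1 hg.2
  refine ⟨⟨M, hMbound⟩, fun gs hgs => ?_⟩
  -- the uniform lower bound for G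
  have hGc' : ∀ x, r - q ^ 2 / (4 * p) ≤ G x := by
    intro x
    have h := hquad x
    have hd : q ^ 2 / (4 * p) * (4 * p) = q ^ 2 := div_mul_cancel₀ _ (by positivity)
    nlinarith [sq_nonneg (2 * p * x + q), hp, hd]
  set c : ℝ := r - q ^ 2 / (4 * p) with hc
  have hGc : ∀ x, c ≤ G x := hGc'
  have hcα : c ≤ α := by
    have h1 : (∫ _ : X, c ∂μ) ≤ ∫ x, G (gs 0 x) ∂μ :=
      integral_mono (integrable_const _) (hgs 0).1 fun x => hGc _
    rw [integral_const] at h1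
    simp only [probReal_univ, one_smul] at h1
    exact h1.trans (hgs 0).2
  -- extract a weakly convergent subsequence
  obtain ⟨φ, hφ, g, hw⟩ := aux_exists_weak_subseq gs M fun i => hMbound _ (hgs i)
  -- the weak limit lies in the closed convex hull of every tail
  have hmemcl : ∀ n : ℕ,
      g ∈ closure (convexHull ℝ (Set.range fun k => gs (φ (n + k)))) := by
    intro n
    refine aux_mem_of_weak_limit _ ((convex_convexHull ℝ _).closure) isClosed_closure
      (fun k => gs (φ (n + k)))
      (fun k => subset_closure (subset_convexHull ℝ _ (Set.mem_range_self k))) g ?_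
    intro ψ
    have := (hw ψ).comp (tendsto_add_atTop_nat n)
    simpa [Function.comp_def, Nat.add_comm] using this
  -- choose strongly approximating convex combinations
  have hch : ∀ n : ℕ, ∃ h : Lp ℝ 2 μ,
      h ∈ convexHull ℝ (Set.range fun k => gs (φ (n + k))) ∧
      dist g h < 1 / (n + 1) := by
    intro n
    obtain ⟨h, hmem, hd⟩ := Metric.mem_closure_iff.mp (hmemcl n) (1 / (n + 1))
      (by positivity)
    exact ⟨h, hmem, hd⟩
  choose h hhmem hhd using hch
  have hhconstraint : ∀ n, Integrable (fun x => G (h n x)) μ ∧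
      (∫ x, G (h n x) ∂μ) ≤ α := by
    intro n
    exact aux_comb μ G hGconv hGcont c α hGc (fun k => gs (φ (n + k)))
      (fun k => hgs (φ (n + k))) (h n) (hhmem n)
  -- h n → g in L², hence a.e. along a subsequence
  have hdist0 : Tendsto (fun n => dist (h n) g) atTop (𝓝 0) := by
    refine squeeze_zero (g := fun n : ℕ => 1 / ((n:ℝ) + 1)) (fun n => dist_nonneg) (fun n => ?_) ?_
    · rw [dist_comm]; exact le_of_lt (hhd n)
    · exact tendsto_one_div_add_atTop_nhds_zero_nat
  have heLp : Tendsto (fun n => eLpNorm (⇑(h n) - ⇑g) 2 μ) atTop (𝓝 0) := by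
    have he : ∀ n, eLpNorm (⇑(h n) - ⇑g) 2 μ = ENNReal.ofReal (dist (h n) g) := by
      intro n
      have hne : eLpNorm (⇑(h n) - ⇑g) 2 μ ≠ ⊤ := by
        rw [← eLpNorm_congr_ae (Lp.coeFn_sub (h n) g)]
        exact Lp.eLpNorm_ne_top _
      rw [Lp.dist_def, ENNReal.ofReal_toReal hne]
    simp only [he]
    have := (ENNReal.continuous_ofReal.tendsto 0).comp hdist0
    simpa [Function.comp_def] using this
  have hmeasure : TendstoInMeasure μ (fun n => ⇑(h n)) atTop ⇑g :=
    tendstoInMeasure_of_tendsto_eLpNorm (p := 2) (by norm_num)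
      (fun n => Lp.aestronglyMeasurable (h n)) (Lp.aestronglyMeasurable g) heLp
  obtain ⟨ρ, hρ, hae⟩ := hmeasure.exists_seq_tendsto_ae
  -- Fatou's lemma
  have hmeasG : AEStronglyMeasurable (fun x => G (g x)) μ :=
    hGcont.comp_aestronglyMeasurable (Lp.aestronglyMeasurable g)
  have hmeasfl : ∀ j, AEMeasurable (fun x => ENNReal.ofReal (G (h (ρ j) x) - c)) μ :=
    fun j => ENNReal.measurable_ofReal.comp_aemeasurable
      (((hGcont.comp_aestronglyMeasurable
        (Lp.aestronglyMeasurable (h (ρ j)))).aemeasurable).sub aemeasurable_const)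
  have hfatou : (∫⁻ x, ENNReal.ofReal (G (g x) - c) ∂μ) ≤
      atTop.liminf fun j => ∫⁻ x, ENNReal.ofReal (G (h (ρ j) x) - c) ∂μ := by
    have hliminf := lintegral_liminf_le' (u := atTop) hmeasfl
    refine le_trans (le_of_eq ?_) hliminf
    refine lintegral_congr_ae ?_
    filter_upwards [hae] with x hx
    have htd : Tendsto (fun j => ENNReal.ofReal (G (h (ρ j) x) - c)) atTop
        (𝓝 (ENNReal.ofReal (G (g x) - c))) := by
      exact (ENNReal.continuous_ofReal.tendsto _).comp
        (((hGcont.tendsto _).comp hx).sub tendsto_const_nhds)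
    exact htd.liminf_eq.symm
  have hbnd : ∀ j, (∫⁻ x, ENNReal.ofReal (G (h (ρ j) x) - c) ∂μ) ≤
      ENNReal.ofReal (α - c) := by
    intro j
    have hi : Integrable (fun x => G (h (ρ j) x) - c) μ :=
      (hhconstraint (ρ j)).1.sub (integrable_const c)
    rw [← ofReal_integral_eq_lintegral_ofReal hi
      (Eventually.of_forall fun x => sub_nonneg.mpr (hGc _))]
    apply ENNReal.ofReal_le_ofReal
    rw [integral_sub (hhconstraint (ρ j)).1 (integrable_const c), integral_const]
    simp only [probReal_univ, one_smul]
    linarith [(hhconstraint (ρ j)).2]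
  have hkey : (∫⁻ x, ENNReal.ofReal (G (g x) - c) ∂μ) ≤ ENNReal.ofReal (α - c) := by
    refine hfatou.trans ?_
    calc atTop.liminf (fun j => ∫⁻ x, ENNReal.ofReal (G (h (ρ j) x) - c) ∂μ)
        ≤ atTop.liminf (fun _ : ℕ => ENNReal.ofReal (α - c)) :=
          liminf_le_liminf (Eventually.of_forall hbnd)
      _ = ENNReal.ofReal (α - c) := liminf_const _
  have hintsub : Integrable (fun x => G (g x) - c) μ := by
    refine ⟨hmeasG.sub aestronglyMeasurable_const, ?_⟩
    rw [hasFiniteIntegral_iff_ofReal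
      (Eventually.of_forall fun x => sub_nonneg.mpr (hGc _))]
    exact lt_of_le_of_lt hkey ENNReal.ofReal_lt_top
  have hintG : Integrable (fun x => G (g x)) μ :=
    (hintsub.add (integrable_const c)).congr (Eventually.of_forall fun x => by simp)
  have hintle : (∫ x, G (g x) ∂μ) ≤ α := by
    have h1 : (∫ x, (G (g x) - c) ∂μ) ≤ α - c := by
      rw [integral_eq_lintegral_of_nonneg_ae
        (Eventually.of_forall fun x => sub_nonneg.mpr (hGc _))
        (hmeasG.sub aestronglyMeasurable_const)]
      calc (∫⁻ x, ENNReal.ofReal (G (g x) - c) ∂μ).toReal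
          ≤ (ENNReal.ofReal (α - c)).toReal :=
            ENNReal.toReal_mono ENNReal.ofReal_ne_top hkey
        _ = α - c := ENNReal.toReal_ofReal (by linarith)
    rw [integral_sub hintG (integrable_const c), integral_const] at h1
    simp only [probReal_univ, one_smul] at h1
    linarith
  refine ⟨φ, g, hφ, ⟨hintG, hintle⟩, fun ψ => ?_⟩
  have hip : ∀ f : Lp ℝ 2 μ, (∫ x, f x * ψ x ∂μ) = ⟪f, ψ⟫ := by
    intro f
    rw [L2.inner_def]
    refine integral_congr_ae (Eventually.of_forall fun x => ?_)
    simp [RCLike.inner_apply, mul_comm]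
  simp only [hip]
  exact hw ψ

end
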